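/- For \tau > -1 and r \in (0, j_{\tau}), with h_u(r) := r J_{\tau+1}(r)/J_{\tau}(r), one has r h_u'(r)/h_u(r) = 2 + r (J_{\tau+1}(r)/J_{\tau}(r) - J_{\tau+2}(r)/J_{\tau+1}(r)) > 2. Consequently, if k_u denotes the inverse function of h_u, then 2 s k_u'(s) < k_u(s) for all s in the range of h_u, and the map D \mapsto D \cdot (k_u(\mu R / D)/R)^2 is increasing in D > 0 for any fixed \mu, R > 0. -/

import Mathlib

/-- For `τ > -1` and `r ∈ (0, j_τ)`, with `h_u(r) = r J_{τ+1}(r)/J_τ(r)`,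
one has `r h_u'(r)/h_u(r) = 2 + r(J_{τ+1}/J_τ - J_{τ+2}/J_{τ+1}) > 2`. Consequently the
inverse `k_u` of `h_u` satisfies `2s k_u'(s) < k_u(s)` for all `s > 0` (the range of
`h_u`), and `D ↦ D (k_u(μR/D)/R)²` is increasing on `(0,∞)` for fixed `μ, R > 0`. -/
theorem stmt15 (J : ℝ → ℝ → ℝ) (j : ℝ → ℝ) (τ : ℝ) (hτ : -1 < τ)
    (μ R : ℝ) (hμ : 0 < μ) (hR : 0 < R)
    (hjpos : 0 < j τ)
    (hJpos : ∀ σ : ℝ, τ ≤ σ → ∀ r ∈ Set.Ioo 0 (j τ), 0 < J σ r)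
    (hrec : ∀ σ : ℝ, -1 < σ → ∀ r : ℝ, 0 < r →
      HasDerivAt (fun s : ℝ => s ^ (-σ) * J σ s) (-(r ^ (-σ) * J (σ + 1) r)) r)
    (hquot : ∀ r ∈ Set.Ioo 0 (j τ),
      J (τ + 2) r / J (τ + 1) r < J (τ + 1) r / J τ r)
    (k : ℝ → ℝ)
    (hkleft : ∀ r ∈ Set.Ioo 0 (j τ), k (r * J (τ + 1) r / J τ r) = r)
    (hkright : ∀ s : ℝ, 0 < s →
      k s ∈ Set.Ioo 0 (j τ) ∧ k s * J (τ + 1) (k s) / J τ (k s) = s) :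
    (∀ r ∈ Set.Ioo 0 (j τ),
      r * deriv (fun s : ℝ => s * J (τ + 1) s / J τ s) r / (r * J (τ + 1) r / J τ r)
          = 2 + r * (J (τ + 1) r / J τ r - J (τ + 2) r / J (τ + 1) r) ∧
      2 < r * deriv (fun s : ℝ => s * J (τ + 1) s / J τ s) r
            / (r * J (τ + 1) r / J τ r)) ∧
    (∀ s : ℝ, 0 < s → 2 * s * deriv k s < k s) ∧
    StrictMonoOn (fun D : ℝ => D * (k (μ * R / D) / R) ^ 2) (Set.Ioi 0) := by
  set h : ℝ → ℝ := fun s : ℝ => s * J (τ + 1) s / J τ s with hh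
  set E : ℝ → ℝ := fun r =>
    2 * (J (τ+1) r / J τ r) + r * ((J (τ+1) r)^2 - J τ r * J (τ+2) r) / (J τ r)^2 with hE
  -- derivative of h
  have hdh : ∀ r ∈ Set.Ioo 0 (j τ), HasDerivAt h (E r) r := by
    intro r hr
    have hr0 : 0 < r := hr.1
    have hJ0 : 0 < J τ r := hJpos τ le_rfl r hr
    have hba : r ^ (-(τ+1)) = r ^ (-τ) / r := by
      rw [show -(τ+1) = -τ - 1 by ring, Real.rpow_sub hr0, Real.rpow_one]
    have H0 : HasDerivAt (fun s : ℝ => s ^ (-τ) * J τ s) (-(r ^ (-τ) * J (τ+1) r)) r :=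
      hrec τ hτ r hr0
    have H1 : HasDerivAt (fun s : ℝ => s ^ (-(τ+1)) * J (τ+1) s)
        (-(r ^ (-(τ+1)) * J (τ+2) r)) r := by
      have := hrec (τ+1) (by linarith) r hr0
      simpa [show τ+1+1 = τ+2 by ring] using this
    have hu0 : r ^ (-τ) * J τ r ≠ 0 := by positivity
    have hA : HasDerivAt (fun s : ℝ => s^2 *
        ((s ^ (-(τ+1)) * J (τ+1) s) / (s ^ (-τ) * J τ s)))
        ((2:ℕ) * r ^ (2-1) * ((r ^ (-(τ+1)) * J (τ+1) r) / (r ^ (-τ) * J τ r)) +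
          r^2 * ((-(r ^ (-(τ+1)) * J (τ+2) r) * (r ^ (-τ) * J τ r) -
            (r ^ (-(τ+1)) * J (τ+1) r) * -(r ^ (-τ) * J (τ+1) r)) / (r ^ (-τ) * J τ r)^2)) r :=
      (hasDerivAt_pow 2 r).mul (H1.div H0 hu0)
    have heq : h =ᶠ[nhds r]
        (fun s : ℝ => s^2 * ((s ^ (-(τ+1)) * J (τ+1) s) / (s ^ (-τ) * J τ s))) := by
      filter_upwards [eventually_gt_nhds hr0] with s hs
      have hsa : (0:ℝ) < s ^ (-τ) := Real.rpow_pos_of_pos hs _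
      have hsb : s ^ (-(τ+1)) = s ^ (-τ) / s := by
        rw [show -(τ+1) = -τ - 1 by ring, Real.rpow_sub hs, Real.rpow_one]
      show s * J (τ + 1) s / J τ s = _
      rw [hsb]
      by_cases hJ : J τ s = 0
      · simp [hJ]
      · field_simp
    have := hA.congr_of_eventuallyEq heq
    refine this.congr_deriv ?_
    have ha : (0:ℝ) < r ^ (-τ) := Real.rpow_pos_of_pos hr0 _
    rw [hE, hba]
    field_simp
    ring
  -- positivity facts
  have hhpos : ∀ r ∈ Set.Ioo 0 (j τ), 0 < h r := by
    intro r hr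
    have hJ0 : 0 < J τ r := hJpos τ le_rfl r hr
    have hJ1 : 0 < J (τ+1) r := hJpos (τ+1) (by linarith) r hr
    exact div_pos (mul_pos hr.1 hJ1) hJ0
  have hEpos : ∀ r ∈ Set.Ioo 0 (j τ), 0 < E r := by
    intro r hr
    have hJ0 : 0 < J τ r := hJpos τ le_rfl r hr
    have hJ1 : 0 < J (τ+1) r := hJpos (τ+1) (by linarith) r hr
    have hq := hquot r hr
    have hnum : 0 < (J (τ+1) r)^2 - J τ r * J (τ+2) r := by
      rw [div_lt_div_iff₀ hJ1 hJ0] at hq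
      nlinarith
    have h1 : 0 < r * ((J (τ+1) r)^2 - J τ r * J (τ+2) r) / (J τ r)^2 := by
      have := hr.1; positivity
    have h2 : 0 < 2 * (J (τ+1) r / J τ r) := by positivity
    rw [hE]; dsimp only; linarith
  have hratio : ∀ r ∈ Set.Ioo 0 (j τ),
      r * E r / h r = 2 + r * (J (τ + 1) r / J τ r - J (τ + 2) r / J (τ + 1) r) := by
    intro r hr
    have hJ0 : (J τ r) ≠ 0 := (hJpos τ le_rfl r hr).ne'
    have hJ1 : (J (τ+1) r) ≠ 0 := (hJpos (τ+1) (by linarith) r hr).ne'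
    have hr0 : r ≠ 0 := hr.1.ne'
    rw [hE, hh]
    field_simp
  have hgt : ∀ r ∈ Set.Ioo 0 (j τ), 2 * h r < r * E r := by
    intro r hr
    have h1 := hratio r hr
    have hq : 0 < r * (J (τ + 1) r / J τ r - J (τ + 2) r / J (τ + 1) r) :=
      mul_pos hr.1 (sub_pos.mpr (hquot r hr))
    have h2 : 2 < r * E r / h r := by rw [h1]; linarith
    have hp := hhpos r hr
    rw [lt_div_iff₀ hp] at h2
    linarith
  -- strict monotonicity of h
  have hmono : StrictMonoOn h (Set.Ioo 0 (j τ)) := by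
    apply strictMonoOn_of_deriv_pos (convex_Ioo _ _)
    · intro x hx
      exact (hdh x hx).continuousAt.continuousWithinAt
    · intro x hx
      rw [interior_Ioo] at hx
      rw [(hdh x hx).deriv]
      exact hEpos x hx
  -- derivative of k
  have hkd : ∀ s : ℝ, 0 < s → HasDerivAt k (E (k s))⁻¹ s := by
    intro s hs
    obtain ⟨hks, hhk⟩ := hkright s hs
    have hhk' : h (k s) = s := hhk
    have hcont : ContinuousAt k s := by
      rw [ContinuousAt, tendsto_order]
      constructor
      · intro a ha
        rcases le_or_gt a 0 with ha0 | ha0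
        · filter_upwards [eventually_gt_nhds hs] with y hy
          exact lt_of_le_of_lt ha0 (hkright y hy).1.1
        · set c := (a + k s) / 2 with hc
          have hac : a < c := by rw [hc]; linarith
          have hck : c < k s := by rw [hc]; linarith
          have hcI : c ∈ Set.Ioo 0 (j τ) := ⟨by linarith, by linarith [hks.2]⟩
          have hhc : h c < s := by rw [← hhk']; exact hmono hcI hks hck
          filter_upwards [eventually_gt_nhds hhc, eventually_gt_nhds hs] with y hy hy0
          by_contra hcon
          push_neg at hcon
          have hky : k y < c := lt_of_le_of_lt hcon hac
          have h1 : h (k y) < h c := hmono (hkright y hy0).1 hcI hky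
          have h2 : h (k y) = y := (hkright y hy0).2
          rw [h2] at h1
          linarith
      · intro b hb
        rcases le_or_gt (j τ) b with hb0 | hb0
        · filter_upwards [eventually_gt_nhds hs] with y hy
          exact lt_of_lt_of_le (hkright y hy).1.2 hb0
        · set c := (k s + b) / 2 with hc
          have hck : k s < c := by rw [hc]; linarith
          have hcb : c < b := by rw [hc]; linarith
          have hcI : c ∈ Set.Ioo 0 (j τ) := ⟨by linarith [hks.1], by linarith⟩
          have hhc : s < h c := by rw [← hhk']; exact hmono hks hcI hck
          filter_upwards [eventually_lt_nhds hhc, eventually_gt_nhds hs] with y hy hy0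
          by_contra hcon
          push_neg at hcon
          have hky : c < k y := lt_of_lt_of_le hcb hcon
          have h1 : h c < h (k y) := hmono hcI (hkright y hy0).1 hky
          have h2 : h (k y) = y := (hkright y hy0).2
          rw [h2] at h1
          linarith
    have hfk : ∀ᶠ y in nhds s, h (k y) = y := by
      filter_upwards [eventually_gt_nhds hs] with y hy
      exact (hkright y hy).2
    exact HasDerivAt.of_local_left_inverse hcont (hdh (k s) hks) (hEpos (k s) hks).ne' hfk
  -- part 2
  have hk2 : ∀ s : ℝ, 0 < s → 2 * s * deriv k s < k s := by
    intro s hs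
    obtain ⟨hks, hhk⟩ := hkright s hs
    have hhk' : h (k s) = s := hhk
    have hEp := hEpos (k s) hks
    rw [(hkd s hs).deriv, ← div_eq_mul_inv, div_lt_iff₀ hEp]
    have := hgt (k s) hks
    rw [hhk'] at this
    linarith
  refine ⟨?_, hk2, ?_⟩
  · intro r hr
    have hd := (hdh r hr).deriv
    have hq : 0 < r * (J (τ + 1) r / J τ r - J (τ + 2) r / J (τ + 1) r) :=
      mul_pos hr.1 (sub_pos.mpr (hquot r hr))
    constructor
    · rw [hd]; exact hratio r hr
    · rw [hd]
      have := hratio r hr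
      rw [hh] at this
      rw [this]
      linarith
  -- part 3
  · have hgD : ∀ D ∈ Set.Ioi (0:ℝ), HasDerivAt (fun x : ℝ => x * (k (μ * R / x) / R) ^ 2)
        ((k (μ*R/D) * (k (μ*R/D) - 2*(μ*R/D)*deriv k (μ*R/D))) / R^2) D := by
      intro D hD
      have hD0 : (0:ℝ) < D := hD
      have hs : 0 < μ * R / D := div_pos (mul_pos hμ hR) hD0
      have hk := hkd _ hs
      have hkder : deriv k (μ*R/D) = (E (k (μ*R/D)))⁻¹ := hk.deriv
      have inner : HasDerivAt (fun x : ℝ => μ * R / x) (μ * R * -(D^2)⁻¹) D := by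
        simpa [div_eq_mul_inv] using (hasDerivAt_inv hD0.ne').const_mul (μ*R)
      have comp : HasDerivAt (fun x : ℝ => k (μ*R/x))
          ((E (k (μ*R/D)))⁻¹ * (μ * R * -(D^2)⁻¹)) D := by
        have := hk.comp D inner
        simpa [Function.comp_def] using this
      have full := (hasDerivAt_id D).mul ((comp.pow 2).div_const (R^2))
      have hfun : (fun x : ℝ => x * (k (μ * R / x) / R) ^ 2)
          = fun x : ℝ => x * ((k (μ*R/x))^2 / R^2) := by
        funext x; rw [div_pow]
      rw [hfun, hkder]
      refine full.congr_deriv ?_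
      simp only [id_eq, pow_one, Nat.cast_ofNat, Pi.pow_apply]
      generalize (E (k (μ * R / D)))⁻¹ = P
      generalize k (μ * R / D) = K
      field_simp
      ring
    apply strictMonoOn_of_deriv_pos (convex_Ioi 0)
    · intro x hx
      exact (hgD x hx).continuousAt.continuousWithinAt
    · intro x hx
      rw [interior_Ioi] at hx
      rw [(hgD x hx).deriv]
      have hx0 : (0:ℝ) < x := hx
      have hs : 0 < μ * R / x := div_pos (mul_pos hμ hR) hx0
      have hks := (hkright _ hs).1
      have h2 := hk2 _ hs
      exact div_pos (mul_pos hks.1 (by linarith)) (pow_pos hR 2)
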